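/- Let ν > 0, λ := 1/(2ν) − √(1/(4ν²) + 4π²), and define u : ℝ² → ℝ² by u(x,y) = (1 − e^{λx} cos(2πy), (λ/(2π)) e^{λx} sin(2πy)) and p : ℝ² → ℝ by p(x,y) = −(1/2) e^{2λx} + c for any constant c ∈ ℝ. Then (u, p) is an exact solution of the steady incompressible Navier–Stokes equations with zero forcing: at every point of ℝ², −ν Δu + (u·∇)u + ∇p = 0 and div u = 0, where Δu is applied componentwise, (u·∇)u has components u₁ ∂u_i/∂x + u₂ ∂u_i/∂y, and ∇p = (∂p/∂x, ∂p/∂y). Equivalently, (u,p) solves the steady Stokes equations −νΔu + ∇p = f, div u = 0 with right-hand side f = −(u·∇)u. -/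

import Mathlib

open Real

private lemma hExp (a x : ℝ) : HasDerivAt (fun t => Real.exp (a * t)) (a * Real.exp (a * x)) x := by
  have h := (Real.hasDerivAt_exp (a * x)).comp x ((hasDerivAt_id x).const_mul a)
  refine h.congr_deriv ?_
  ring

private lemma hCos (a x : ℝ) : HasDerivAt (fun t => Real.cos (a * t)) (-(a * Real.sin (a * x))) x := by
  have h := (Real.hasDerivAt_cos (a * x)).comp x ((hasDerivAt_id x).const_mul a)
  refine h.congr_deriv ?_
  ring

private lemma hSin (a x : ℝ) : HasDerivAt (fun t => Real.sin (a * t)) (a * Real.cos (a * x)) x := by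
  have h := (Real.hasDerivAt_sin (a * x)).comp x ((hasDerivAt_id x).const_mul a)
  refine h.congr_deriv ?_
  ring

private lemma kovDerivCexp (b a x : ℝ) :
    deriv (fun t => b * Real.exp (a * t)) x = b * (a * Real.exp (a * x)) :=
  ((hExp a x).const_mul b).deriv

private lemma kovDerivCsin (b a x : ℝ) :
    deriv (fun t => b * Real.sin (a * t)) x = b * (a * Real.cos (a * x)) :=
  ((hSin a x).const_mul b).deriv

private lemma kovDerivCcos (b a x : ℝ) :
    deriv (fun t => b * Real.cos (a * t)) x = b * (-(a * Real.sin (a * x))) :=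
  ((hCos a x).const_mul b).deriv

private lemma deriv_sub_cexp (c b a x : ℝ) :
    deriv (fun t => c - b * Real.exp (a * t)) x = -(b * (a * Real.exp (a * x))) :=
  (((hExp a x).const_mul b).const_sub c).deriv

private lemma deriv_sub_ccos (c b a x : ℝ) :
    deriv (fun t => c - b * Real.cos (a * t)) x = -(b * (-(a * Real.sin (a * x)))) :=
  (((hCos a x).const_mul b).const_sub c).deriv

private lemma kovDerivCexp_add (b a c x : ℝ) :
    deriv (fun t => b * Real.exp (a * t) + c) x = b * (a * Real.exp (a * x)) :=
  (((hExp a x).const_mul b).add_const c).deriv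

/-- The Kovasznay flow `(u, p)` is an exact solution of the steady incompressible
Navier–Stokes equations with zero forcing: `−νΔu + (u·∇)u + ∇p = 0` and `div u = 0`. -/
theorem kovasznay_solves_steady_navier_stokes (ν : ℝ) (hν : 0 < ν) (lam c : ℝ)
    (hlam : lam = 1 / (2 * ν) - Real.sqrt (1 / (4 * ν ^ 2) + 4 * π ^ 2))
    (u₁ u₂ p : ℝ → ℝ → ℝ)
    (hu₁ : ∀ x y, u₁ x y = 1 - Real.exp (lam * x) * Real.cos (2 * π * y))
    (hu₂ : ∀ x y, u₂ x y = lam / (2 * π) * Real.exp (lam * x) * Real.sin (2 * π * y))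
    (hp : ∀ x y, p x y = -(1 / 2) * Real.exp (2 * lam * x) + c) :
    ∀ x y : ℝ,
      (-ν * (deriv (fun s => deriv (fun t => u₁ t y) s) x
            + deriv (fun s => deriv (fun t => u₁ x t) s) y)
        + u₁ x y * deriv (fun s => u₁ s y) x + u₂ x y * deriv (fun s => u₁ x s) y
        + deriv (fun s => p s y) x = 0)
      ∧ (-ν * (deriv (fun s => deriv (fun t => u₂ t y) s) x
            + deriv (fun s => deriv (fun t => u₂ x t) s) y)
        + u₁ x y * deriv (fun s => u₂ s y) x + u₂ x y * deriv (fun s => u₂ x s) y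
        + deriv (fun s => p x s) y = 0)
      ∧ deriv (fun s => u₁ s y) x + deriv (fun s => u₂ x s) y = 0 := by
  have hν' : ν ≠ 0 := ne_of_gt hν
  have hs : Real.sqrt (1 / (4 * ν ^ 2) + 4 * π ^ 2) = 1 / (2 * ν) - lam := by
    rw [hlam]; ring
  have hsq : (1 / (2 * ν) - lam) ^ 2 = 1 / (4 * ν ^ 2) + 4 * π ^ 2 := by
    rw [← hs]
    exact Real.sq_sqrt (by positivity)
  have key : ν * lam ^ 2 - lam = 4 * π ^ 2 * ν := by
    have h3 : 16 * ν ^ 3 * (ν * lam ^ 2 - lam) = 16 * ν ^ 3 * (4 * π ^ 2 * ν) := by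
      field_simp at hsq
      linear_combination ν ^ 2 * hsq
    exact mul_left_cancel₀ (by positivity) h3
  have hπ : (2 : ℝ) * π ≠ 0 := by positivity
  have hk' : 2 * π * (lam / (2 * π)) = lam := by field_simp
  intro x y
  -- first derivatives as functions
  have d1x : deriv (fun t => u₁ t y)
      = fun s => -(Real.cos (2 * π * y) * (lam * Real.exp (lam * s))) := by
    funext s
    rw [show (fun t => u₁ t y) = fun t => 1 - Real.cos (2 * π * y) * Real.exp (lam * t) from
      funext fun t => by rw [hu₁ t y]; ring]
    exact deriv_sub_cexp _ _ _ _
  have d1y : deriv (fun t => u₁ x t)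
      = fun s => -(Real.exp (lam * x) * (-(2 * π * Real.sin (2 * π * s)))) := by
    funext s
    rw [show (fun t => u₁ x t) = fun t => 1 - Real.exp (lam * x) * Real.cos (2 * π * t) from
      funext fun t => hu₁ x t]
    exact deriv_sub_ccos _ _ _ _
  have d2x : deriv (fun t => u₂ t y)
      = fun s => lam / (2 * π) * Real.sin (2 * π * y) * (lam * Real.exp (lam * s)) := by
    funext s
    rw [show (fun t => u₂ t y)
        = fun t => lam / (2 * π) * Real.sin (2 * π * y) * Real.exp (lam * t) from
      funext fun t => by rw [hu₂ t y]; ring]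
    exact kovDerivCexp _ _ _
  have d2y : deriv (fun t => u₂ x t)
      = fun s => lam / (2 * π) * Real.exp (lam * x) * (2 * π * Real.cos (2 * π * s)) := by
    funext s
    rw [show (fun t => u₂ x t)
        = fun t => lam / (2 * π) * Real.exp (lam * x) * Real.sin (2 * π * t) from
      funext fun t => hu₂ x t]
    exact kovDerivCsin _ _ _
  -- second derivatives at the point
  have dd1x : deriv (fun s => deriv (fun t => u₁ t y) s) x
      = -(Real.cos (2 * π * y) * lam) * (lam * Real.exp (lam * x)) := by
    rw [d1x]
    rw [show (fun s => -(Real.cos (2 * π * y) * (lam * Real.exp (lam * s))))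
        = fun s => -(Real.cos (2 * π * y) * lam) * Real.exp (lam * s) from
      funext fun s => by ring]
    exact kovDerivCexp _ _ _
  have dd1y : deriv (fun s => deriv (fun t => u₁ x t) s) y
      = Real.exp (lam * x) * (2 * π) * (2 * π * Real.cos (2 * π * y)) := by
    rw [d1y]
    rw [show (fun s => -(Real.exp (lam * x) * (-(2 * π * Real.sin (2 * π * s)))))
        = fun s => Real.exp (lam * x) * (2 * π) * Real.sin (2 * π * s) from
      funext fun s => by ring]
    exact kovDerivCsin _ _ _
  have dd2x : deriv (fun s => deriv (fun t => u₂ t y) s) x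
      = lam / (2 * π) * Real.sin (2 * π * y) * lam * (lam * Real.exp (lam * x)) := by
    rw [d2x]
    rw [show (fun s => lam / (2 * π) * Real.sin (2 * π * y) * (lam * Real.exp (lam * s)))
        = fun s => lam / (2 * π) * Real.sin (2 * π * y) * lam * Real.exp (lam * s) from
      funext fun s => by ring]
    exact kovDerivCexp _ _ _
  have dd2y : deriv (fun s => deriv (fun t => u₂ x t) s) y
      = lam / (2 * π) * Real.exp (lam * x) * (2 * π) * (-(2 * π * Real.sin (2 * π * y))) := by
    rw [d2y]
    rw [show (fun s => lam / (2 * π) * Real.exp (lam * x) * (2 * π * Real.cos (2 * π * s)))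
        = fun s => lam / (2 * π) * Real.exp (lam * x) * (2 * π) * Real.cos (2 * π * s) from
      funext fun s => by ring]
    exact kovDerivCcos _ _ _
  -- pressure derivatives
  have dpx : deriv (fun s => p s y) x = -(1 / 2) * (2 * lam * Real.exp (2 * lam * x)) := by
    rw [show (fun s => p s y) = fun s => -(1 / 2) * Real.exp (2 * lam * s) + c from
      funext fun s => hp s y]
    exact kovDerivCexp_add _ _ _ _
  have dpy : deriv (fun s => p x s) y = 0 := by
    rw [show (fun s => p x s) = fun _ => -(1 / 2) * Real.exp (2 * lam * x) + c from
      funext fun s => hp x s]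
    exact deriv_const _ _
  have hE2 : Real.exp (2 * lam * x) = Real.exp (lam * x) * Real.exp (lam * x) := by
    rw [← Real.exp_add]; ring_nf
  have pyth : Real.sin (2 * π * y) ^ 2 + Real.cos (2 * π * y) ^ 2 = 1 :=
    Real.sin_sq_add_cos_sq _
  refine ⟨?_, ?_, ?_⟩
  · rw [dd1x, dd1y, d1x, d1y, dpx, hu₁ x y, hu₂ x y, hE2]
    linear_combination (Real.exp (lam * x) * Real.cos (2 * π * y)) * key
      + (lam * Real.exp (lam * x) * Real.exp (lam * x)) * pyth
      + (Real.exp (lam * x) * Real.exp (lam * x) * Real.sin (2 * π * y) ^ 2) * hk'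
  · rw [dd2x, dd2y, d2x, d2y, dpy, hu₁ x y, hu₂ x y]
    linear_combination (-(lam / (2 * π) * Real.exp (lam * x) * Real.sin (2 * π * y))) * key
      + (lam / (2 * π) * Real.exp (lam * x) * Real.exp (lam * x) * Real.sin (2 * π * y)
          * Real.cos (2 * π * y)) * hk'
  · rw [d1x, d2y]
    linear_combination (Real.exp (lam * x) * Real.cos (2 * π * y)) * hk'
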